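/- Let p be an odd prime and n ≥ 2 an integer, and set σ_k := (n^k − 1)² · |n^k − 1|_p, which is the number of fixed points of the k-th iterate of the multiplication-by-n map on an ordinary elliptic curve over the algebraic closure of 𝔽_p; the associated growth rate is Λ = n². (i) If n is coprime to p, let d be the multiplicative order of n modulo p and e := v_p(n^d − 1); then the Cesàro mean B := 𝒞(σ_k/n^{2k}) = 𝒞(|n^k − 1|_p) exists and equals 1 − (1/d)·(1 − p/(p^e(p+1))), which is a rational number different from 1. (ii) If p divides n, then B = 1. -/

import Mathlib

open Filter Topology Real

noncomputable section

def CesaroLim (a : ℕ → ℝ) (B : ℝ) : Prop :=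
  Tendsto (fun X : ℕ => (∑ k ∈ Finset.Icc 1 X, a k) / (X : ℝ)) atTop (𝓝 B)

lemma cesaro_of_range {a : ℕ → ℝ} {B : ℝ}
    (h : Tendsto (fun X : ℕ => (∑ i ∈ Finset.range X, a (1 + i)) / (X : ℝ)) atTop (𝓝 B)) :
    CesaroLim a B := by
  unfold CesaroLim
  convert h using 2 with X
  rw [← Finset.Ico_add_one_right_eq_Icc, Finset.sum_Ico_eq_sum_range]
  simp

lemma cesaro_of_tendsto {a : ℕ → ℝ} {B : ℝ} (h : Tendsto a atTop (𝓝 B)) :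
    CesaroLim a B := by
  apply cesaro_of_range
  have : Tendsto (fun i : ℕ => a (1 + i)) atTop (𝓝 B) := by
    apply h.comp
    exact tendsto_atTop_mono (fun i => Nat.le_add_left i 1) tendsto_id
  simpa [div_eq_inv_mul] using this.cesaro

lemma cesaro_add {a b : ℕ → ℝ} {A B : ℝ} (ha : CesaroLim a A) (hb : CesaroLim b B) :
    CesaroLim (fun k => a k + b k) (A + B) := by
  have := ha.add hb
  unfold CesaroLim at *
  convert this using 2 with X
  rw [Finset.sum_add_distrib, add_div]

lemma cesaro_congr_sub {a b : ℕ → ℝ} {B : ℝ}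
    (hd : Tendsto (fun k => b k - a k) atTop (𝓝 0)) (ha : CesaroLim a B) :
    CesaroLim b B := by
  have := cesaro_add ha (cesaro_of_tendsto hd)
  simpa using this


def Ureal (p M : ℕ) : ℝ := ∑ m ∈ Finset.Icc 1 M, ((p:ℝ) ^ padicValNat p m)⁻¹

lemma Urec {p : ℕ} (hp : p.Prime) (M : ℕ) :
    Ureal p M = ((M:ℝ) - (M / p : ℕ)) + (p:ℝ)⁻¹ * Ureal p (M / p) := by
  have hp1 : 1 < p := hp.one_lt
  have hp0 : (p:ℝ) ≠ 0 := by positivity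
  have h1 : ∑ m ∈ (Finset.Icc 1 M).filter (fun m => p ∣ m), ((p:ℝ) ^ padicValNat p m)⁻¹
      = (p:ℝ)⁻¹ * Ureal p (M / p) := by
    unfold Ureal
    rw [Finset.mul_sum]
    refine Finset.sum_bij' (fun m _ => m / p) (fun m' _ => p * m') ?_ ?_ ?_ ?_ ?_
    · intro a ha
      simp only [Finset.mem_filter, Finset.mem_Icc] at ha ⊢
      obtain ⟨⟨h1a, h2a⟩, hdvd⟩ := ha
      constructor
      · exact (Nat.one_le_div_iff hp.pos).mpr (Nat.le_of_dvd h1a hdvd)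
      · exact Nat.div_le_div_right h2a
    · intro a ha
      simp only [Finset.mem_filter, Finset.mem_Icc] at ha ⊢
      obtain ⟨h1a, h2a⟩ := ha
      refine ⟨⟨by nlinarith [hp.pos], ?_⟩, Dvd.intro _ rfl⟩
      exact (Nat.le_div_iff_mul_le hp.pos).mp h2a |>.trans_eq' (Nat.mul_comm p a ▸ rfl)
    · intro a ha
      simp only [Finset.mem_filter, Finset.mem_Icc] at ha
      exact Nat.mul_div_cancel' ha.2
    · intro a ha
      exact Nat.mul_div_cancel_left a hp.pos
    · intro a ha
      simp only [Finset.mem_filter, Finset.mem_Icc] at ha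
      obtain ⟨⟨h1a, _⟩, hdvd⟩ := ha
      obtain ⟨c, rfl⟩ := hdvd
      have hc : c ≠ 0 := by rintro rfl; simp at h1a
      have : Fact p.Prime := ⟨hp⟩
      show ((p:ℝ) ^ padicValNat p (p * c))⁻¹ = (p:ℝ)⁻¹ * ((p:ℝ) ^ padicValNat p (p * c / p))⁻¹
      rw [Nat.mul_div_cancel_left c hp.pos]
      rw [padicValNat.mul (by positivity) hc, padicValNat.self hp1, pow_add, pow_one,
        mul_inv]
  have hcount : ((Finset.Icc 1 M).filter (fun m => ¬ p ∣ m)).card = M - M / p := by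
    have htot : (Finset.Icc 1 M).card = M := by simp
    have hdiv : ((Finset.Icc 1 M).filter (fun m => p ∣ m)).card = M / p := by
      rw [show Finset.Icc 1 M = Finset.Ioc 0 M from by rw [← Finset.Icc_add_one_left_eq_Ioc]; rfl]
      exact Nat.Ioc_filter_dvd_card_eq_div M p
    have hsum := Finset.card_filter_add_card_filter_not
        (s := Finset.Icc 1 M) (p := fun m => p ∣ m)
    omega
  have h2 : ∑ m ∈ (Finset.Icc 1 M).filter (fun m => ¬ p ∣ m), ((p:ℝ) ^ padicValNat p m)⁻¹
      = ((M - M / p : ℕ) : ℝ) := by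
    have hone : ∀ m ∈ (Finset.Icc 1 M).filter (fun m => ¬ p ∣ m),
        ((p:ℝ) ^ padicValNat p m)⁻¹ = 1 := by
      intro m hm
      simp only [Finset.mem_filter] at hm
      rw [padicValNat.eq_zero_of_not_dvd hm.2, pow_zero, inv_one]
    rw [Finset.sum_congr rfl hone, Finset.sum_const, nsmul_eq_mul, mul_one, hcount]
  show (∑ m ∈ Finset.Icc 1 M, ((p:ℝ) ^ padicValNat p m)⁻¹) = _
  rw [← Finset.sum_filter_add_sum_filter_not (Finset.Icc 1 M) (fun m => p ∣ m), h1, h2,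
    Nat.cast_sub (Nat.div_le_self M p)]
  ring

lemma Ubound {p : ℕ} (hp : p.Prime) : ∀ M : ℕ,
    |Ureal p M - (M : ℝ) * ((p:ℝ) / ((p:ℝ) + 1))| ≤ 1 := by
  intro M
  induction M using Nat.strong_induction_on with
  | _ M IH =>
    rcases Nat.eq_zero_or_pos M with rfl | hM
    · have : Ureal p 0 = 0 := by
        unfold Ureal
        rw [Finset.Icc_eq_empty (by norm_num), Finset.sum_empty]
      rw [this, Nat.cast_zero, zero_mul, sub_zero, abs_zero]
      exact zero_le_one
    have hP2 : (2:ℝ) ≤ (p:ℝ) := by exact_mod_cast hp.two_le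
    have hP0 : (0:ℝ) < (p:ℝ) := by linarith
    have hP1 : (0:ℝ) < (p:ℝ) + 1 := by linarith
    have hlt : M / p < M := Nat.div_lt_self hM hp.one_lt
    have hδ := IH (M / p) hlt
    rw [Urec hp M]
    set P : ℝ := (p:ℝ)
    set M' : ℝ := ((M / p : ℕ) : ℝ) with hM'
    set U' : ℝ := Ureal p (M / p) with hU'
    set r : ℝ := ((M % p : ℕ) : ℝ) with hr
    have hMeq : (M : ℝ) = P * M' + r := by
      have h := Nat.div_add_mod M p
      rw [hM', hr, show P = ((p:ℕ):ℝ) from rfl]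
      exact_mod_cast h.symm
    have hr0 : 0 ≤ r := by rw [hr]; positivity
    have hrP : r ≤ P - 1 := by
      have h2' : (M % p) + 1 ≤ p := Nat.mod_lt M hp.pos
      have h2 : ((M % p : ℕ) : ℝ) + 1 ≤ ((p:ℕ) : ℝ) := by exact_mod_cast h2'
      rw [show ((p:ℕ) : ℝ) = P from rfl] at h2
      rw [hr]; linarith
    set δ : ℝ := U' - M' * (P / (P + 1)) with hδdef
    have hUeq : U' = M' * (P / (P + 1)) + δ := by rw [hδdef]; ring
    have hE : (M:ℝ) - M' + P⁻¹ * U' - (M:ℝ) * (P / (P + 1)) = r / (P + 1) + δ / P := by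
      rw [hMeq, hUeq]
      field_simp
      ring
    rw [hE]
    rw [abs_le] at hδ ⊢
    have h1 : r / (P + 1) ≤ (P - 1) / (P + 1) := by gcongr
    have h2 : 0 ≤ r / (P + 1) := by positivity
    have h3 : δ / P ≤ 1 / P := by gcongr; exact hδ.2
    have h4 : -1 / P ≤ δ / P := by gcongr ?_ / P; exact hδ.1
    have h4' : -(1 / P) ≤ δ / P := by rw [← neg_div]; exact h4
    have h5 : (P - 1) / (P + 1) + 1 / P ≤ 1 := by
      rw [div_add_div _ _ (by positivity) (by positivity), div_le_one (by positivity)]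
      nlinarith
    have h6 : 1 / P ≤ 1 := by rw [div_le_one hP0]; linarith
    constructor
    · linarith
    · linarith

lemma sum_split {d : ℕ} (hd : 0 < d) (f g : ℕ → ℝ) (c : ℝ)
    (h1 : ∀ k, 1 ≤ k → ¬ d ∣ k → f k = 1)
    (h2 : ∀ m, 1 ≤ m → f (d * m) = c * g m) (X : ℕ) :
    ∑ k ∈ Finset.Icc 1 X, f k
      = ((X:ℝ) - (X / d : ℕ)) + c * ∑ m ∈ Finset.Icc 1 (X / d), g m := by
  have hA : ∑ k ∈ (Finset.Icc 1 X).filter (fun k => d ∣ k), f k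
      = c * ∑ m ∈ Finset.Icc 1 (X / d), g m := by
    rw [Finset.mul_sum]
    refine Finset.sum_bij' (fun k _ => k / d) (fun m _ => d * m) ?_ ?_ ?_ ?_ ?_
    · intro a ha
      simp only [Finset.mem_filter, Finset.mem_Icc] at ha ⊢
      obtain ⟨⟨h1a, h2a⟩, hdvd⟩ := ha
      exact ⟨(Nat.one_le_div_iff hd).mpr (Nat.le_of_dvd h1a hdvd),
        Nat.div_le_div_right h2a⟩
    · intro a ha
      simp only [Finset.mem_filter, Finset.mem_Icc] at ha ⊢
      obtain ⟨h1a, h2a⟩ := ha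
      refine ⟨⟨by nlinarith, ?_⟩, Dvd.intro _ rfl⟩
      calc d * a ≤ d * (X / d) := Nat.mul_le_mul_left d h2a
        _ ≤ X := Nat.mul_div_le X d
    · intro a ha
      simp only [Finset.mem_filter, Finset.mem_Icc] at ha
      exact Nat.mul_div_cancel' ha.2
    · intro a _
      exact Nat.mul_div_cancel_left a hd
    · intro a ha
      simp only [Finset.mem_filter, Finset.mem_Icc] at ha
      obtain ⟨⟨h1a, _⟩, hdvd⟩ := ha
      obtain ⟨m, rfl⟩ := hdvd
      have hm : 1 ≤ m := by nlinarith
      show f (d * m) = c * g (d * m / d)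
      rw [Nat.mul_div_cancel_left m hd, h2 m hm]
  have hcount : ((Finset.Icc 1 X).filter (fun k => ¬ d ∣ k)).card = X - X / d := by
    have htot : (Finset.Icc 1 X).card = X := by simp
    have hdiv : ((Finset.Icc 1 X).filter (fun k => d ∣ k)).card = X / d := by
      rw [show Finset.Icc 1 X = Finset.Ioc 0 X from by rw [← Finset.Icc_add_one_left_eq_Ioc]; rfl]
      exact Nat.Ioc_filter_dvd_card_eq_div X d
    have hsum := Finset.card_filter_add_card_filter_not
      (s := Finset.Icc 1 X) (p := fun k => d ∣ k)
    omega
  have hB : ∑ k ∈ (Finset.Icc 1 X).filter (fun k => ¬ d ∣ k), f k = ((X - X / d : ℕ) : ℝ) := by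
    have hone : ∀ k ∈ (Finset.Icc 1 X).filter (fun k => ¬ d ∣ k), f k = 1 := by
      intro k hk
      simp only [Finset.mem_filter, Finset.mem_Icc] at hk
      exact h1 k hk.1.1 hk.2
    rw [Finset.sum_congr rfl hone, Finset.sum_const, nsmul_eq_mul, mul_one, hcount]
  rw [← Finset.sum_filter_add_sum_filter_not (Finset.Icc 1 X) (fun k => d ∣ k), hA, hB,
    Nat.cast_sub (Nat.div_le_self X d)]
  ring

lemma tendsto_of_bounded_dev (S : ℕ → ℝ) (B C : ℝ) (h : ∀ X : ℕ, |S X - B * X| ≤ C) :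
    Tendsto (fun X : ℕ => S X / X) atTop (𝓝 B) := by
  have h0 : Tendsto (fun X : ℕ => S X / X - B) atTop (𝓝 0) := by
    apply squeeze_zero_norm' (a := fun X : ℕ => C / X)
    · filter_upwards [eventually_ge_atTop 1] with X hX
      have hX0 : (0:ℝ) < X := by exact_mod_cast hX
      have : S X / X - B = (S X - B * X) / X := by field_simp
      rw [Real.norm_eq_abs, this, abs_div, abs_of_pos hX0]
      gcongr
      exact h X
    · exact tendsto_const_div_atTop_nhds_zero_nat C
  have := h0.add (tendsto_const_nhds (x := B) (f := atTop))
  simpa using this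

section NT

variable {p n : ℕ}

lemma order_facts (hp : p.Prime) (hn : 2 ≤ n) (hco : Nat.Coprime n p) :
    0 < orderOf (n : ZMod p) ∧ ¬ p ∣ orderOf (n : ZMod p) ∧
      (∀ k, (p ∣ n ^ k - 1 ↔ orderOf (n : ZMod p) ∣ k)) := by
  haveI : Fact p.Prime := ⟨hp⟩
  have hpn : ¬ p ∣ n := (hp.coprime_iff_not_dvd.mp hco.symm)
  have hnz : (n : ZMod p) ≠ 0 := by
    rw [Ne, ZMod.natCast_eq_zero_iff]
    exact hpn
  have hferm : (n : ZMod p) ^ (p - 1) = 1 := ZMod.pow_card_sub_one_eq_one hnz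
  have hd_dvd : orderOf (n : ZMod p) ∣ p - 1 := orderOf_dvd_of_pow_eq_one hferm
  have hp1 : 0 < p - 1 := by have := hp.two_le; omega
  have hd_pos : 0 < orderOf (n : ZMod p) := by
    rcases Nat.eq_zero_or_pos (orderOf (n : ZMod p)) with h | h
    · rw [h] at hd_dvd
      omega
    · exact h
  have hd_le : orderOf (n : ZMod p) ≤ p - 1 := Nat.le_of_dvd hp1 hd_dvd
  refine ⟨hd_pos, ?_, ?_⟩
  · intro hpd
    have := Nat.le_of_dvd hd_pos hpd
    omega
  · intro k
    have h1k : 1 ≤ n ^ k := Nat.one_le_pow _ _ (by omega)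
    rw [← Nat.modEq_iff_dvd' h1k]
    constructor
    · intro h
      have : (n : ZMod p) ^ k = 1 := by
        have := (ZMod.natCast_eq_natCast_iff (n ^ k) 1 p).mpr h.symm
        push_cast at this
        exact this
      exact orderOf_dvd_of_pow_eq_one this
    · intro h
      have : (n : ZMod p) ^ k = 1 := orderOf_dvd_iff_pow_eq_one.mp h
      have h2 : ((n ^ k : ℕ) : ZMod p) = ((1 : ℕ) : ZMod p) := by push_cast; exact this
      exact ((ZMod.natCast_eq_natCast_iff _ _ _).mp h2).symm

lemma val_formula (hp : p.Prime) (hodd : Odd p) (hn : 2 ≤ n) (hco : Nat.Coprime n p)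
    {m : ℕ} (hm : m ≠ 0) :
    padicValNat p (n ^ (orderOf (n : ZMod p) * m) - 1)
      = padicValNat p (n ^ orderOf (n : ZMod p) - 1) + padicValNat p m := by
  haveI : Fact p.Prime := ⟨hp⟩
  obtain ⟨hd_pos, hpd, hiff⟩ := order_facts hp hn hco
  set d := orderOf (n : ZMod p)
  have hpn : ¬ p ∣ n := (hp.coprime_iff_not_dvd.mp hco.symm)
  have hyx : 1 < n ^ d := Nat.one_lt_pow (by omega) (by omega)
  have hxy : p ∣ n ^ d - 1 := (hiff d).mpr dvd_rfl
  have hx : ¬ p ∣ n ^ d := fun h => hpn (hp.dvd_of_dvd_pow h)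
  have := padicValNat.pow_sub_pow (p := p) hodd (x := n ^ d) (y := 1) hyx
    (by simpa using hxy) (by simpa using hx) hm
  simpa [← pow_mul] using this

lemma Srec (hp : p.Prime) (hodd : Odd p) (hn : 2 ≤ n) (hco : Nat.Coprime n p) (X : ℕ) :
    ∑ k ∈ Finset.Icc 1 X, ((p:ℝ) ^ padicValNat p (n ^ k - 1))⁻¹
      = ((X:ℝ) - (X / orderOf (n : ZMod p) : ℕ))
        + ((p:ℝ) ^ padicValNat p (n ^ orderOf (n : ZMod p) - 1))⁻¹
          * Ureal p (X / orderOf (n : ZMod p)) := by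
  obtain ⟨hd_pos, hpd, hiff⟩ := order_facts hp hn hco
  set d := orderOf (n : ZMod p)
  set e := padicValNat p (n ^ d - 1)
  exact sum_split hd_pos _ _ _
    (fun k _ hk => by
      rw [padicValNat.eq_zero_of_not_dvd (fun h => hk ((hiff k).mp h)), pow_zero, inv_one])
    (fun m hm => by
      rw [val_formula hp hodd hn hco (by omega), pow_add, mul_inv]) X

lemma caseI_tendsto (hp : p.Prime) (hodd : Odd p) (hn : 2 ≤ n) (hco : Nat.Coprime n p) :
    Tendsto (fun X : ℕ =>
        (∑ k ∈ Finset.Icc 1 X, ((p:ℝ) ^ padicValNat p (n ^ k - 1))⁻¹) / (X : ℝ)) atTop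
      (𝓝 (1 - (1 / (orderOf (n : ZMod p) : ℝ)) *
          (1 - (p : ℝ) /
            ((p : ℝ) ^ padicValNat p (n ^ orderOf (n : ZMod p) - 1) * ((p : ℝ) + 1))))) := by
  haveI : Fact p.Prime := ⟨hp⟩
  obtain ⟨hd_pos, hpd, hiff⟩ := order_facts hp hn hco
  set d := orderOf (n : ZMod p) with hddef
  set e := padicValNat p (n ^ d - 1) with hedef
  have he1 : 1 ≤ e := by
    have hxy : p ∣ n ^ d - 1 := (hiff d).mpr dvd_rfl
    have hpos : 0 < n ^ d - 1 := by
      have : 1 < n ^ d := Nat.one_lt_pow (by omega) (by omega)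
      omega
    exact one_le_padicValNat_of_dvd hpos.ne' hxy
  apply tendsto_of_bounded_dev _ _ 3
  intro X
  rw [Srec hp hodd hn hco X]
  set P : ℝ := (p:ℝ) with hPdef
  have hP2 : (2:ℝ) ≤ P := by rw [hPdef]; exact_mod_cast hp.two_le
  set D : ℝ := (d:ℝ) with hDdef
  have hD1 : (1:ℝ) ≤ D := by rw [hDdef]; exact_mod_cast hd_pos
  set Pe : ℝ := P ^ e with hPedef
  have hPe : P ≤ Pe := by
    rw [hPedef]
    calc P = P ^ 1 := (pow_one P).symm
      _ ≤ P ^ e := pow_le_pow_right₀ (by linarith) he1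
  set M : ℝ := ((X / d : ℕ) : ℝ) with hMdef
  set r : ℝ := ((X % d : ℕ) : ℝ) with hrdef
  have hXeq : (X : ℝ) = D * M + r := by
    have h := Nat.div_add_mod X d
    rw [hMdef, hrdef, hDdef]
    exact_mod_cast h.symm
  have hr0 : 0 ≤ r := by rw [hrdef]; positivity
  have hrD : r ≤ D - 1 := by
    have h2' : (X % d) + 1 ≤ d := Nat.mod_lt X hd_pos
    have h2 : ((X % d : ℕ) : ℝ) + 1 ≤ ((d:ℕ) : ℝ) := by exact_mod_cast h2'
    rw [hrdef, hDdef]; linarith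
  have hM0 : 0 ≤ M := by rw [hMdef]; positivity
  set δ : ℝ := Ureal p (X / d) - M * (P / (P + 1)) with hδdef
  have hδ : |δ| ≤ 1 := Ubound hp (X / d)
  have hUeq : Ureal p (X / d) = M * (P / (P + 1)) + δ := by rw [hδdef]; ring
  have hD0 : (0:ℝ) < D := by linarith
  have hP0 : (0:ℝ) < P := by linarith
  have hPe0 : (0:ℝ) < Pe := by linarith
  have hP10 : (0:ℝ) < P + 1 := by linarith
  have hE : (X:ℝ) - M + Pe⁻¹ * Ureal p (X / d)
      - (1 - 1 / D * (1 - P / (Pe * (P + 1)))) * X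
      = (r / D) * (1 - P / (Pe * (P + 1))) + δ / Pe := by
    rw [hUeq, hXeq]
    field_simp
    ring
  rw [hE]
  have ht0 : 0 ≤ 1 - P / (Pe * (P + 1)) := by
    have : P / (Pe * (P + 1)) ≤ 1 := by
      rw [div_le_one (by positivity)]
      nlinarith
    linarith
  have ht1 : 1 - P / (Pe * (P + 1)) ≤ 1 := by
    have : 0 ≤ P / (Pe * (P + 1)) := by positivity
    linarith
  have ha1 : 0 ≤ (r / D) * (1 - P / (Pe * (P + 1))) := by positivity
  have ha2 : (r / D) * (1 - P / (Pe * (P + 1))) ≤ 1 := by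
    have hrd : r / D ≤ 1 := by rw [div_le_one hD0]; linarith
    nlinarith [div_nonneg hr0 hD0.le]
  have hb : |δ / Pe| ≤ 1 := by
    rw [abs_div, abs_of_pos hPe0]
    rw [div_le_one hPe0]
    linarith [abs_nonneg δ]
  calc |(r / D) * (1 - P / (Pe * (P + 1))) + δ / Pe|
      ≤ |(r / D) * (1 - P / (Pe * (P + 1)))| + |δ / Pe| := abs_add_le _ _
    _ ≤ 3 := by
        rw [abs_of_nonneg ha1]
        linarith

end NT

lemma g_tendsto {n : ℕ} (hn : 2 ≤ n) :
    Tendsto (fun k : ℕ => ((n:ℝ) ^ k - 1) ^ 2 / (n:ℝ) ^ (2 * k)) atTop (𝓝 1) := by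
  have hn0 : (0:ℝ) < n := by positivity
  have hn1 : (1:ℝ) < n := by exact_mod_cast hn.trans_lt' one_lt_two
  have hx : Tendsto (fun k : ℕ => ((n:ℝ)⁻¹) ^ k) atTop (𝓝 0) :=
    tendsto_pow_atTop_nhds_zero_of_lt_one (by positivity) (by
      rw [inv_lt_one_iff₀]; right; exact hn1)
  have h0 : Tendsto (fun k : ℕ => (1 - ((n:ℝ)⁻¹) ^ k) ^ 2) atTop (𝓝 1) := by
    have := (tendsto_const_nhds (x := (1:ℝ)) (f := atTop (α := ℕ))).sub hx
    have h2 := this.pow 2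
    simpa using h2
  refine h0.congr fun k => ?_
  have hpk : (0:ℝ) < (n:ℝ) ^ k := by positivity
  rw [mul_comm 2 k, pow_mul, ← div_pow]
  congr 1
  rw [inv_pow]
  field_simp

theorem elliptic_cesaro (p : ℕ) (hp : p.Prime) (hodd : Odd p) (n : ℕ) (hn : 2 ≤ n) :
    (Nat.Coprime n p →
      ∃ B : ℝ,
        B = 1 - (1 / (orderOf (n : ZMod p) : ℝ)) *
            (1 - (p : ℝ) /
              ((p : ℝ) ^ padicValNat p (n ^ orderOf (n : ZMod p) - 1) * ((p : ℝ) + 1))) ∧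
        CesaroLim (fun k => (((n : ℝ) ^ k - 1) ^ 2 *
            ((p : ℝ) ^ padicValNat p (n ^ k - 1))⁻¹) / (n : ℝ) ^ (2 * k)) B ∧
        CesaroLim (fun k => ((p : ℝ) ^ padicValNat p (n ^ k - 1))⁻¹) B ∧
        (∃ q : ℚ, (q : ℝ) = B) ∧ B ≠ 1) ∧
    (p ∣ n →
      CesaroLim (fun k => (((n : ℝ) ^ k - 1) ^ 2 *
          ((p : ℝ) ^ padicValNat p (n ^ k - 1))⁻¹) / (n : ℝ) ^ (2 * k)) 1 ∧
      CesaroLim (fun k => ((p : ℝ) ^ padicValNat p (n ^ k - 1))⁻¹) 1) := by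
  have hP2 : (2:ℝ) ≤ (p:ℝ) := by exact_mod_cast hp.two_le
  have haux : ∀ k : ℕ, ((p:ℝ) ^ padicValNat p (n ^ k - 1))⁻¹ ≤ 1 ∧
      0 < ((p:ℝ) ^ padicValNat p (n ^ k - 1))⁻¹ := by
    intro k
    have h1 : (1:ℝ) ≤ (p:ℝ) ^ padicValNat p (n ^ k - 1) := one_le_pow₀ (by linarith)
    constructor
    · rw [inv_le_one_iff₀]; right; exact h1
    · positivity
  constructor
  · -- coprime case
    intro hco
    set d := orderOf (n : ZMod p) with hddef
    set e := padicValNat p (n ^ d - 1) with hedef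
    haveI : Fact p.Prime := ⟨hp⟩
    set B : ℝ := 1 - (1 / (d : ℝ)) * (1 - (p : ℝ) / ((p : ℝ) ^ e * ((p : ℝ) + 1))) with hBdef
    obtain ⟨hd_pos, hpd, hiff⟩ := order_facts hp hn hco
    have he1 : 1 ≤ e := by
      have hxy : p ∣ n ^ d - 1 := (hiff d).mpr dvd_rfl
      have hpos : 0 < n ^ d - 1 := by
        have : 1 < n ^ d := Nat.one_lt_pow (by omega) (by omega)
        omega
      exact one_le_padicValNat_of_dvd hpos.ne' hxy
    have hC2 : CesaroLim (fun k => ((p : ℝ) ^ padicValNat p (n ^ k - 1))⁻¹) B :=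
      caseI_tendsto hp hodd hn hco
    have hC1 : CesaroLim (fun k => (((n : ℝ) ^ k - 1) ^ 2 *
        ((p : ℝ) ^ padicValNat p (n ^ k - 1))⁻¹) / (n : ℝ) ^ (2 * k)) B := by
      apply cesaro_congr_sub _ hC2
      have hg := g_tendsto hn
      apply squeeze_zero_norm (a := fun k : ℕ =>
        |((n:ℝ) ^ k - 1) ^ 2 / (n:ℝ) ^ (2 * k) - 1|)
      · intro k
        have hfac : (((n : ℝ) ^ k - 1) ^ 2 * ((p : ℝ) ^ padicValNat p (n ^ k - 1))⁻¹)
              / (n : ℝ) ^ (2 * k) - ((p : ℝ) ^ padicValNat p (n ^ k - 1))⁻¹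
            = ((p : ℝ) ^ padicValNat p (n ^ k - 1))⁻¹
              * (((n:ℝ) ^ k - 1) ^ 2 / (n:ℝ) ^ (2 * k) - 1) := by
          ring
        rw [Real.norm_eq_abs, hfac, abs_mul]
        have := haux k
        calc |((p : ℝ) ^ padicValNat p (n ^ k - 1))⁻¹|
              * |((n:ℝ) ^ k - 1) ^ 2 / (n:ℝ) ^ (2 * k) - 1|
            ≤ 1 * |((n:ℝ) ^ k - 1) ^ 2 / (n:ℝ) ^ (2 * k) - 1| := by
              apply mul_le_mul_of_nonneg_right _ (abs_nonneg _)
              rw [abs_of_pos this.2]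
              exact this.1
          _ = _ := one_mul _
      · have := (hg.sub (tendsto_const_nhds (x := (1:ℝ)))).abs
        simpa using this
    refine ⟨B, rfl, hC1, hC2, ?_, ?_⟩
    · refine ⟨1 - (1 / (d : ℚ)) * (1 - (p : ℚ) / ((p : ℚ) ^ e * ((p : ℚ) + 1))), ?_⟩
      rw [hBdef]
      push_cast
      ring
    · -- B ≠ 1
      have hD0 : (0:ℝ) < (d:ℝ) := by exact_mod_cast hd_pos
      have hPe : (p:ℝ) ≤ (p:ℝ) ^ e := by
        calc (p:ℝ) = (p:ℝ) ^ 1 := (pow_one _).symm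
          _ ≤ (p:ℝ) ^ e := pow_le_pow_right₀ (by linarith) he1
      have hlt : (p:ℝ) / ((p : ℝ) ^ e * ((p : ℝ) + 1)) < 1 := by
        rw [div_lt_one (by positivity)]
        nlinarith
      have hpos : 0 < (1 / (d : ℝ)) * (1 - (p : ℝ) / ((p : ℝ) ^ e * ((p : ℝ) + 1))) := by
        apply mul_pos (by positivity)
        linarith
      have hBlt : B < 1 := by rw [hBdef]; linarith
      exact hBlt.ne
  · -- p ∣ n case
    intro hpn
    have hv : ∀ k : ℕ, 1 ≤ k → padicValNat p (n ^ k - 1) = 0 := by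
      intro k hk
      apply padicValNat.eq_zero_of_not_dvd
      intro hdvd
      have h1 : p ∣ n ^ k := dvd_pow hpn (by omega)
      have h2 : 1 ≤ n ^ k := Nat.one_le_pow _ _ (by omega)
      have : p ∣ n ^ k - (n ^ k - 1) := Nat.dvd_sub h1 hdvd
      rw [Nat.sub_sub_self h2] at this
      have h3 := Nat.le_of_dvd one_pos this
      have h4 := hp.two_le
      omega
    have ha : Tendsto (fun k : ℕ => ((p : ℝ) ^ padicValNat p (n ^ k - 1))⁻¹) atTop (𝓝 1) := by
      apply Tendsto.congr' _ (tendsto_const_nhds (x := (1:ℝ)))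
      filter_upwards [eventually_ge_atTop 1] with k hk
      rw [hv k hk, pow_zero, inv_one]
    constructor
    · apply cesaro_of_tendsto
      have := ha.mul (g_tendsto hn)
      simp only [one_mul] at this
      refine this.congr fun k => ?_
      ring
    · exact cesaro_of_tendsto ha
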